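/- Let h ∈ ℝ and K > 0 be such that |c_t(x,y) − h t| ≤ K for all t ≥ 1 and all x, y ∈ M. Then for every T > 0, the quantity α_T := inf_μ (1/T) C_T(μ,μ), where the infimum is taken over all Borel probability measures μ on M, equals h. -/

import Mathlib

open MeasureTheory ProbabilityTheory
open scoped ENNReal NNReal


/-- A coupling of two Borel probability measures: a probability measure on `M × M`
whose first marginal is `μ` and second marginal is `ν`. -/
def IsCoupling {M : Type*} [MeasurableSpace M]
    (P : Measure (M × M)) (μ ν : Measure M) : Prop :=
  P.map Prod.fst = μ ∧ P.map Prod.snd = ν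

/-- The Monge–Kantorovich optimal transportation cost `C(μ,ν)`:
the infimum of `∫ c dΠ` over all couplings `Π` of `μ` and `ν`. -/
noncomputable def transportCost {M : Type*} [MeasurableSpace M]
    (c : M → M → ℝ) (μ ν : Measure M) : ℝ :=
  sInf {r : ℝ | ∃ P : Measure (M × M), IsProbabilityMeasure P ∧ IsCoupling P μ ν ∧
    r = ∫ p, c p.1 p.2 ∂P}

section Aux

variable {M : Type*} [MetricSpace M] [CompactSpace M] [Nonempty M]
    [MeasurableSpace M] [BorelSpace M]

lemma aux_cont {c : ℝ → M → M → ℝ}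
    (hc : ContinuousOn (fun p : ℝ × M × M => c p.1 p.2.1 p.2.2) {p | 0 < p.1})
    {t : ℝ} (ht : 0 < t) : Continuous (fun p : M × M => c t p.1 p.2) := by
  rw [← continuousOn_univ]
  have heq : (fun p : M × M => c t p.1 p.2)
      = (fun q : ℝ × M × M => c q.1 q.2.1 q.2.2) ∘ (fun p : M × M => (t, p)) := rfl
  rw [heq]
  exact hc.comp ((continuous_const.prodMk continuous_id).continuousOn) (fun p _ => ht)

lemma aux_bound {c : ℝ → M → M → ℝ}
    (hc : ContinuousOn (fun p : ℝ × M × M => c p.1 p.2.1 p.2.2) {p | 0 < p.1})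
    {t : ℝ} (ht : 0 < t) : ∃ B : ℝ, 0 ≤ B ∧ ∀ x y : M, |c t x y| ≤ B := by
  have hcont : Continuous fun p : M × M => |c t p.1 p.2| := (aux_cont hc ht).abs
  obtain ⟨p0, -, hp0⟩ := isCompact_univ.exists_isMaxOn Set.univ_nonempty hcont.continuousOn
  exact ⟨|c t p0.1 p0.2|, abs_nonneg _, fun x y => hp0 (Set.mem_univ (x, y))⟩

lemma aux_dpp_le {c : ℝ → M → M → ℝ}
    (hc : ContinuousOn (fun p : ℝ × M × M => c p.1 p.2.1 p.2.2) {p | 0 < p.1})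
    (hdpp : ∀ s t : ℝ, 0 < s → 0 < t → ∀ x y : M,
      c (s + t) x y = ⨅ z : M, (c s x z + c t z y))
    {s t : ℝ} (hs : 0 < s) (ht : 0 < t) (x y z : M) :
    c (s + t) x y ≤ c s x z + c t z y := by
  rw [hdpp s t hs ht x y]
  have hcont : Continuous fun w : M => c s x w + c t w y :=
    ((aux_cont hc hs).comp (Continuous.prodMk_right x)).add
      ((aux_cont hc ht).comp (continuous_id.prodMk continuous_const))
  exact ciInf_le (isCompact_range hcont).bddBelow z

lemma aux_chain {c : ℝ → M → M → ℝ}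
    (hc : ContinuousOn (fun p : ℝ × M × M => c p.1 p.2.1 p.2.2) {p | 0 < p.1})
    (hdpp : ∀ s t : ℝ, 0 < s → 0 < t → ∀ x y : M,
      c (s + t) x y = ⨅ z : M, (c s x z + c t z y))
    {T : ℝ} (hT : 0 < T) :
    ∀ n : ℕ, 1 ≤ n → ∀ x y : M, ∀ ε : ℝ, 0 < ε → ∃ z : ℕ → M, z 0 = x ∧ z n = y ∧
      ∑ i ∈ Finset.range n, c T (z i) (z (i + 1)) ≤ c (n * T) x y + ε := by
  intro n
  induction n with
  | zero => exact fun hn => absurd hn (by norm_num)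
  | succ n IH =>
    intro _ x y ε hε
    rcases Nat.eq_zero_or_pos n with hn | hn
    · subst hn
      refine ⟨fun i => if i = 0 then x else y, by simp, by simp, ?_⟩
      simp only [Finset.sum_range_one]
      norm_num
      linarith
    · have hnT : 0 < (n : ℝ) * T := mul_pos (by exact_mod_cast hn) hT
      have heq : ((n + 1 : ℕ) : ℝ) * T = (n : ℝ) * T + T := by push_cast; ring
      have hlt : ⨅ z : M, (c ((n : ℝ) * T) x z + c T z y) < c (((n + 1 : ℕ) : ℝ) * T) x y + ε / 2 := by
        rw [heq, ← hdpp _ _ hnT hT x y]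
        linarith
      obtain ⟨w, hw⟩ := exists_lt_of_ciInf_lt hlt
      obtain ⟨z, hz0, hzn, hzsum⟩ := IH hn x w (ε / 2) (by linarith)
      refine ⟨fun i => if i ≤ n then z i else y, by simpa using hz0, by simp, ?_⟩
      have e1 : (fun i => if i ≤ n then z i else y) n = w := by simp [hzn]
      have e2 : (fun i => if i ≤ n then z i else y) (n + 1) = y := by simp
      rw [Finset.sum_range_succ, e1, e2]
      have hsum_eq : ∑ i ∈ Finset.range n,
          c T ((fun i => if i ≤ n then z i else y) i) ((fun i => if i ≤ n then z i else y) (i + 1))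
          = ∑ i ∈ Finset.range n, c T (z i) (z (i + 1)) := by
        refine Finset.sum_congr rfl fun i hi => ?_
        have hi' := Finset.mem_range.1 hi
        simp only []
        rw [if_pos (by omega), if_pos (by omega)]
      rw [hsum_eq]
      linarith

lemma aux_integrable {X : Type*} [MetricSpace X] [CompactSpace X] [MeasurableSpace X]
    [OpensMeasurableSpace X] {f : X → ℝ} (hf : Continuous f) (μ : Measure X)
    [IsFiniteMeasure μ] : Integrable f μ :=
  hf.integrable_of_hasCompactSupport (HasCompactSupport.of_compactSpace f)

lemma aux_lower {c : ℝ → M → M → ℝ}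
    (hc : ContinuousOn (fun p : ℝ × M × M => c p.1 p.2.1 p.2.2) {p | 0 < p.1})
    (hdpp : ∀ s t : ℝ, 0 < s → 0 < t → ∀ x y : M,
      c (s + t) x y = ⨅ z : M, (c s x z + c t z y))
    {h K : ℝ}
    (hbound : ∀ t : ℝ, 1 ≤ t → ∀ x y : M, |c t x y - h * t| ≤ K)
    {T : ℝ} (hT : 0 < T) (μ : Measure M) [IsProbabilityMeasure μ]
    (P : Measure (M × M)) [IsProbabilityMeasure P]
    (hcoup : IsCoupling P μ μ) :
    h * T ≤ ∫ p, c T p.1 p.2 ∂P := by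
  classical
  set κ : ProbabilityTheory.Kernel M M := P.condKernel with hκdef
  have hPfst : P.fst = μ := hcoup.1
  have hP : μ ⊗ₘ κ = P := by rw [← hPfst]; exact P.disintegrate _
  -- snd of compProd is bind
  have snd_compProd : ∀ (ν : Measure M) (η : ProbabilityTheory.Kernel M M),
      IsProbabilityMeasure ν → IsMarkovKernel η → (ν ⊗ₘ η).snd = ν.bind η := by
    intro ν η _ _
    ext s hs
    rw [Measure.snd_apply hs, Measure.compProd_apply (measurable_snd hs),
      Measure.bind_apply hs (ProbabilityTheory.Kernel.measurable η).aemeasurable]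
    rfl
  have hinv : μ.bind κ = μ := by
    have h1 := snd_compProd μ κ inferInstance inferInstance
    rw [hP] at h1
    rw [← h1]
    exact hcoup.2
  -- iterated kernel
  set κiter : ℕ → ProbabilityTheory.Kernel M M := fun n => ((κ ∘ₖ ·)^[n]) κ with hκiter
  have hiter0 : κiter 0 = κ := rfl
  have hiterS : ∀ n, κiter (n + 1) = κ ∘ₖ κiter n := by
    intro n
    simp only [hκiter, Function.iterate_succ_apply']
  have hmk : ∀ n, IsMarkovKernel (κiter n) := by
    intro n
    induction n with
    | zero => rw [hiter0]; infer_instance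
    | succ n ih => rw [hiterS]; exact ProbabilityTheory.Kernel.IsMarkovKernel.comp _ _
  have hbindn : ∀ n, μ.bind (κiter n) = μ := by
    intro n
    induction n with
    | zero => rw [hiter0]; exact hinv
    | succ n ih =>
      rw [hiterS]
      have hcoeq : ⇑(κ ∘ₖ κiter n) = fun a => Measure.bind ((κiter n) a) κ :=
        funext fun a => ProbabilityTheory.Kernel.comp_apply κ (κiter n) a
      calc μ.bind (κ ∘ₖ κiter n) = μ.bind fun a => Measure.bind ((κiter n) a) κ := by rw [hcoeq]
        _ = (μ.bind (κiter n)).bind κ :=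
            (Measure.bind_bind (ProbabilityTheory.Kernel.measurable _).aemeasurable
              (ProbabilityTheory.Kernel.measurable _).aemeasurable).symm
        _ = μ.bind κ := by rw [ih]
        _ = μ := hinv
  -- main estimate by Markov-chain gluing
  have main : ∀ n : ℕ, 1 ≤ ((n : ℝ) + 1) * T →
      h * (((n : ℝ) + 1) * T) - K ≤ ((n : ℝ) + 1) * ∫ p, c T p.1 p.2 ∂P := by
    intro n hn1
    have hbk : ∀ k : ℕ, ∃ b : ℝ, 0 ≤ b ∧ ∀ x y : M, |c (((k : ℝ) + 1) * T) x y| ≤ b := by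
      intro k
      exact aux_bound hc (by positivity)
    choose b hb0 hbabs using hbk
    set B : ℝ := ∑ k ∈ Finset.range (n + 1), b k with hBdef
    have hB0 : 0 ≤ B := Finset.sum_nonneg fun k _ => hb0 k
    have hBk : ∀ k, k ≤ n → b k ≤ B := fun k hk =>
      Finset.single_le_sum (fun i _ => hb0 i) (Finset.mem_range.2 (by omega))
    have hpos : ∀ k, k ≤ n → ∀ x y : M, 0 ≤ c (((k : ℝ) + 1) * T) x y + ((k : ℝ) + 1) * B := by
      intro k hk x y
      have h1 := (abs_le.1 (hbabs k x y)).1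
      have hk1 : (1 : ℝ) ≤ (k : ℝ) + 1 := by
        have := Nat.cast_nonneg (α := ℝ) k; linarith
      have h2 : b k ≤ ((k : ℝ) + 1) * B := by nlinarith [hBk k hk, hB0]
      linarith
    have hposT : ∀ y z : M, 0 ≤ c T y z + B := by
      intro y z
      have h1 : -(b 0) ≤ c T y z := by
        have := (abs_le.1 (hbabs 0 y z)).1
        simpa using this
      have h2 := hBk 0 (Nat.zero_le n)
      linarith
    have hmeas : ∀ (t D : ℝ), 0 < t →
        Measurable fun p : M × M => ENNReal.ofReal (c t p.1 p.2 + D) := fun t D ht' =>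
      (((aux_cont hc ht').add continuous_const).measurable).ennreal_ofReal
    set R : ℝ≥0∞ := ∫⁻ p, ENNReal.ofReal (c T p.1 p.2 + B) ∂P with hR
    have key : ∀ k, k ≤ n →
        ∫⁻ p, ENNReal.ofReal (c (((k : ℝ) + 1) * T) p.1 p.2 + ((k : ℝ) + 1) * B)
          ∂(μ ⊗ₘ κiter k) ≤ ((k : ℝ≥0∞) + 1) * R := by
      intro k
      induction k with
      | zero =>
        intro _
        rw [hiter0, hP]
        simp only [Nat.cast_zero, zero_add, one_mul]
        exact hR.ge
      | succ k ih =>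
        intro hk1
        have hk : k ≤ n := by omega
        have ihk := ih hk
        haveI := hmk k
        haveI := hmk (k + 1)
        have hs1 : (0:ℝ) < ((k : ℝ) + 1) * T := by positivity
        have hs2 : (0:ℝ) < ((k : ℝ) + 2) * T := by positivity
        have hcast : (((k + 1 : ℕ) : ℝ) + 1) * T = ((k : ℝ) + 2) * T := by push_cast; ring
        have hcastB : (((k + 1 : ℕ) : ℝ) + 1) * B = ((k : ℝ) + 2) * B := by push_cast; ring
        rw [hiterS, hcast, hcastB]
        rw [Measure.lintegral_compProd (hmeas _ _ hs2)]
        have hGmeas : Measurable fun y => ∫⁻ z, ENNReal.ofReal (c T y z + B) ∂(κ y) :=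
          Measurable.lintegral_kernel_prod_right' (hmeas T B hT)
        have hFmeas : Measurable fun q : M × M =>
            ENNReal.ofReal (c (((k:ℝ)+1)*T) q.1 q.2 + ((k:ℝ)+1)*B) := hmeas _ _ hs1
        have step2 : ∀ x y : M,
            ∫⁻ z, ENNReal.ofReal (c (((k:ℝ)+2)*T) x z + ((k:ℝ)+2)*B) ∂(κ y)
            ≤ ENNReal.ofReal (c (((k:ℝ)+1)*T) x y + ((k:ℝ)+1)*B)
              + ∫⁻ z, ENNReal.ofReal (c T y z + B) ∂(κ y) := by
          intro x y
          have hpt : ∀ z : M, ENNReal.ofReal (c (((k:ℝ)+2)*T) x z + ((k:ℝ)+2)*B)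
              ≤ ENNReal.ofReal (c (((k:ℝ)+1)*T) x y + ((k:ℝ)+1)*B)
                + ENNReal.ofReal (c T y z + B) := by
            intro z
            rw [← ENNReal.ofReal_add (hpos k hk x y) (hposT y z)]
            apply ENNReal.ofReal_le_ofReal
            have hd := aux_dpp_le hc hdpp hs1 hT x z y
            have he : ((k:ℝ)+1)*T + T = ((k:ℝ)+2)*T := by ring
            rw [he] at hd
            linarith
          calc ∫⁻ z, ENNReal.ofReal (c (((k:ℝ)+2)*T) x z + ((k:ℝ)+2)*B) ∂(κ y)
              ≤ ∫⁻ z, (ENNReal.ofReal (c (((k:ℝ)+1)*T) x y + ((k:ℝ)+1)*B)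
                  + ENNReal.ofReal (c T y z + B)) ∂(κ y) := lintegral_mono hpt
            _ = _ := by
                rw [lintegral_add_left measurable_const, lintegral_const, measure_univ, mul_one]
        calc ∫⁻ x, ∫⁻ z, ENNReal.ofReal (c (((k:ℝ)+2)*T) x z + ((k:ℝ)+2)*B)
              ∂((κ ∘ₖ κiter k) x) ∂μ
            = ∫⁻ x, ∫⁻ y, ∫⁻ z, ENNReal.ofReal (c (((k:ℝ)+2)*T) x z + ((k:ℝ)+2)*B)
              ∂(κ y) ∂(κiter k x) ∂μ := by
              refine lintegral_congr fun x => ?_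
              exact Kernel.lintegral_comp κ (κiter k) x
                ((hmeas _ _ hs2).comp measurable_prodMk_left)
          _ ≤ ∫⁻ x, ∫⁻ y, (ENNReal.ofReal (c (((k:ℝ)+1)*T) x y + ((k:ℝ)+1)*B)
              + ∫⁻ z, ENNReal.ofReal (c T y z + B) ∂(κ y)) ∂(κiter k x) ∂μ :=
              lintegral_mono fun x => lintegral_mono fun y => step2 x y
          _ = ∫⁻ x, ((∫⁻ y, ENNReal.ofReal (c (((k:ℝ)+1)*T) x y + ((k:ℝ)+1)*B) ∂(κiter k x))
              + ∫⁻ y, (∫⁻ z, ENNReal.ofReal (c T y z + B) ∂(κ y)) ∂(κiter k x)) ∂μ := by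
              refine lintegral_congr fun x => ?_
              exact lintegral_add_left (hFmeas.comp measurable_prodMk_left) _
          _ = (∫⁻ x, ∫⁻ y, ENNReal.ofReal (c (((k:ℝ)+1)*T) x y + ((k:ℝ)+1)*B) ∂(κiter k x) ∂μ)
              + ∫⁻ x, ∫⁻ y, (∫⁻ z, ENNReal.ofReal (c T y z + B) ∂(κ y)) ∂(κiter k x) ∂μ :=
              lintegral_add_left (Measurable.lintegral_kernel_prod_right' hFmeas) _
          _ ≤ ((k:ℝ≥0∞)+1) * R + R := by
              refine add_le_add ?_ (le_of_eq ?_)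
              · rw [← Measure.lintegral_compProd hFmeas]
                exact ihk
              · rw [← Measure.lintegral_bind (Kernel.measurable (κiter k)).aemeasurable hGmeas.aemeasurable, hbindn k, hR,
                  ← hP, Measure.lintegral_compProd (hmeas T B hT)]
          _ = ((↑(k+1):ℝ≥0∞)+1) * R := by push_cast; ring
    -- final bound for this n
    haveI := hmk n
    have low : ENNReal.ofReal (h * (((n:ℝ)+1)*T) - K + ((n:ℝ)+1)*B)
        ≤ ∫⁻ p, ENNReal.ofReal (c (((n:ℝ)+1)*T) p.1 p.2 + ((n:ℝ)+1)*B) ∂(μ ⊗ₘ κiter n) := by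
      have hpt : ∀ p : M × M, ENNReal.ofReal (h * (((n:ℝ)+1)*T) - K + ((n:ℝ)+1)*B)
          ≤ ENNReal.ofReal (c (((n:ℝ)+1)*T) p.1 p.2 + ((n:ℝ)+1)*B) := by
        intro p
        apply ENNReal.ofReal_le_ofReal
        have := (abs_le.1 (hbound _ hn1 p.1 p.2)).1
        linarith
      calc ENNReal.ofReal (h * (((n:ℝ)+1)*T) - K + ((n:ℝ)+1)*B)
          = ∫⁻ _p : M × M, ENNReal.ofReal (h * (((n:ℝ)+1)*T) - K + ((n:ℝ)+1)*B)
            ∂(μ ⊗ₘ κiter n) := by rw [lintegral_const, measure_univ, mul_one]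
        _ ≤ _ := lintegral_mono hpt
    have hIint : Integrable (fun p : M × M => c T p.1 p.2) P :=
      aux_integrable (aux_cont hc hT) P
    have hJ : ∫ p, (c T p.1 p.2 + B) ∂P = (∫ p, c T p.1 p.2 ∂P) + B := by
      rw [integral_add hIint (integrable_const B), integral_const]
      simp
    have hIB : 0 ≤ (∫ p, c T p.1 p.2 ∂P) + B := by
      rw [← hJ]
      exact integral_nonneg fun p => hposT p.1 p.2
    have hRval : R = ENNReal.ofReal ((∫ p, c T p.1 p.2 ∂P) + B) := by
      rw [hR, ← ofReal_integral_eq_lintegral_ofReal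
        (aux_integrable (f := fun p : M × M => c T p.1 p.2 + B) ((aux_cont hc hT).add continuous_const) P) (ae_of_all _ fun p => hposT p.1 p.2), hJ]
    have hcmp := le_trans low (key n le_rfl)
    rw [hRval] at hcmp
    have hofn : ENNReal.ofReal ((n:ℝ)+1) = (n:ℝ≥0∞)+1 := by
      rw [ENNReal.ofReal_add (Nat.cast_nonneg n) zero_le_one, ENNReal.ofReal_natCast,
        ENNReal.ofReal_one]
    have hcoef : ((n:ℝ≥0∞)+1) * ENNReal.ofReal ((∫ p, c T p.1 p.2 ∂P) + B)
        = ENNReal.ofReal (((n:ℝ)+1) * ((∫ p, c T p.1 p.2 ∂P) + B)) := by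
      rw [ENNReal.ofReal_mul (by positivity), hofn]
    rw [hcoef] at hcmp
    have hfin : h * (((n:ℝ)+1)*T) - K + ((n:ℝ)+1)*B
        ≤ ((n:ℝ)+1) * ((∫ p, c T p.1 p.2 ∂P) + B) :=
      (ENNReal.ofReal_le_ofReal_iff (mul_nonneg (by positivity) hIB)).1 hcmp
    have hex : ((n:ℝ)+1) * ((∫ p, c T p.1 p.2 ∂P) + B)
        = ((n:ℝ)+1) * (∫ p, c T p.1 p.2 ∂P) + ((n:ℝ)+1) * B := by ring
    linarith
  -- conclude
  by_contra hlt
  push_neg at hlt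
  set I : ℝ := ∫ p, c T p.1 p.2 ∂P with hI
  have hδ0 : 0 < h * T - I := by linarith
  obtain ⟨m, hm⟩ := exists_nat_gt (max (K / (h * T - I)) (1 / T))
  have hm1 : 1 ≤ ((m:ℝ)+1) * T := by
    have h1 : 1/T < (m:ℝ) := lt_of_le_of_lt (le_max_right _ _) hm
    rw [div_lt_iff₀ hT] at h1
    nlinarith
  have hmain := main m hm1
  have hKδ : K / (h * T - I) < (m:ℝ) := lt_of_le_of_lt (le_max_left _ _) hm
  rw [div_lt_iff₀ hδ0] at hKδ
  nlinarith


lemma aux_map_sum {X Y ι : Type*} [MeasurableSpace X] [MeasurableSpace Y]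
    (s : Finset ι) (ν : ι → Measure X) {g : X → Y} (hg : Measurable g) :
    (∑ i ∈ s, ν i).map g = ∑ i ∈ s, (ν i).map g := by
  classical
  induction s using Finset.induction with
  | empty => simp
  | insert _ _ hi ih => rw [Finset.sum_insert hi, Finset.sum_insert hi, Measure.map_add _ _ hg, ih]

lemma aux_prob {X : Type*} [MeasurableSpace X] (n : ℕ) [NeZero n] (v : ZMod n → X) :
    IsProbabilityMeasure (((n : ℝ≥0∞)⁻¹) • ∑ i : ZMod n, Measure.dirac (v i)) := by
  constructor
  simp [Measure.smul_apply, Measure.finset_sum_apply]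
  rw [ENNReal.inv_mul_cancel] <;> simp [NeZero.ne n]

lemma aux_zmod_sum (n : ℕ) [NeZero n] (F : ℕ → ℝ) :
    ∑ i : ZMod n, F i.val = ∑ j ∈ Finset.range n, F j := by
  rw [Finset.sum_bij (fun (i : ZMod n) _ => i.val) (fun i _ => Finset.mem_range.2 i.val_lt)
    (fun a _ b _ hab => ZMod.val_injective n hab)
    (fun j hj => ⟨(j : ZMod n), Finset.mem_univ _, ZMod.val_cast_of_lt (Finset.mem_range.1 hj)⟩)
    (fun a _ => rfl)]

end Aux

/-- **The Mather constant equals the weak KAM constant** (Theorem `alpha`): on a compact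
metric space `M` with continuous cost `c` satisfying the dynamic programming identity,
if `|c_t(x,y) − h t| ≤ K` for all `t ≥ 1` and all `x, y`, then for every `T > 0`,
`α_T := inf_μ (1/T) C_T(μ,μ)` over Borel probability measures `μ` equals `h`. -/
theorem mather_constant_eq
    (M : Type*) [MetricSpace M] [CompactSpace M] [Nonempty M]
    [MeasurableSpace M] [BorelSpace M]
    (c : ℝ → M → M → ℝ)
    (hc : ContinuousOn (fun p : ℝ × M × M => c p.1 p.2.1 p.2.2) {p | 0 < p.1})
    (hdpp : ∀ s t : ℝ, 0 < s → 0 < t → ∀ x y : M,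
      c (s + t) x y = ⨅ z : M, (c s x z + c t z y))
    (h K : ℝ) (hK : 0 < K)
    (hbound : ∀ t : ℝ, 1 ≤ t → ∀ x y : M, |c t x y - h * t| ≤ K) :
    ∀ T : ℝ, 0 < T →
      sInf {r : ℝ | ∃ μ : Measure M, IsProbabilityMeasure μ ∧
        r = (1 / T) * transportCost (c T) μ μ} = h := by
  intro T hT
  classical
  set S : Set ℝ := {r : ℝ | ∃ μ : Measure M, IsProbabilityMeasure μ ∧
      r = (1 / T) * transportCost (c T) μ μ} with hSdef
  have hcost_lb : ∀ (μ : Measure M), IsProbabilityMeasure μ → h * T ≤ transportCost (c T) μ μ := by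
    intro μ hμ
    haveI := hμ
    apply le_csInf
    · exact ⟨∫ p, c T p.1 p.2 ∂(μ.prod μ), μ.prod μ, inferInstance,
        ⟨by rw [← Measure.fst, Measure.fst_prod], by rw [← Measure.snd, Measure.snd_prod]⟩, rfl⟩
    · rintro r ⟨P, hPp, hPc, rfl⟩
      haveI := hPp
      exact aux_lower hc hdpp hbound hT μ P hPc
  have hS_lb : ∀ r ∈ S, h ≤ r := by
    rintro r ⟨μ, hμ, rfl⟩
    have h1 := hcost_lb μ hμ
    have h2 : h = (1 / T) * (h * T) := by field_simp
    rw [h2]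
    exact mul_le_mul_of_nonneg_left h1 (by positivity)
  have hS_ne : S.Nonempty :=
    ⟨_, ⟨Measure.dirac (Classical.arbitrary M), inferInstance, rfl⟩⟩
  have hS_bdd : BddBelow S := ⟨h, hS_lb⟩
  refine le_antisymm ?_ (le_csInf hS_ne hS_lb)
  refine le_of_forall_pos_le_add ?_
  intro ε hε
  obtain ⟨n, hn⟩ := exists_nat_gt (max (max ((K + 1) / (ε * T)) (1 / T)) 2)
  have hn2 : 2 ≤ n := by
    have h2 : (2 : ℝ) < n := lt_of_le_of_lt (le_max_right _ _) hn
    exact_mod_cast h2.le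
  have hn1 : 1 ≤ n := by omega
  have hnpos : (0 : ℝ) < n := by exact_mod_cast Nat.pos_of_ne_zero (by omega)
  have hnT1 : (1 : ℝ) ≤ (n : ℝ) * T := by
    have h1 : 1 / T < (n : ℝ) := lt_of_le_of_lt ((le_max_right _ _).trans (le_max_left _ _)) hn
    rw [div_lt_iff₀ hT] at h1
    linarith
  have hnε : (K + 1) / ((n : ℝ) * T) ≤ ε := by
    have h3 : (K + 1) / (ε * T) < (n : ℝ) :=
      lt_of_le_of_lt ((le_max_left _ _).trans (le_max_left _ _)) hn
    rw [div_lt_iff₀ (by positivity)] at h3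
    rw [div_le_iff₀ (by positivity)]
    nlinarith
  set x0 : M := Classical.arbitrary M with hx0
  obtain ⟨z, hz0, hzn, hzsum⟩ := aux_chain hc hdpp hT n hn1 x0 x0 1 one_pos
  have hcnT : c ((n : ℝ) * T) x0 x0 ≤ h * ((n : ℝ) * T) + K := by
    have := (abs_le.1 (hbound _ hnT1 x0 x0)).2
    linarith
  haveI : NeZero n := ⟨by omega⟩
  set w : ZMod n → M := fun i => z i.val with hw
  have hwsucc : ∀ i : ZMod n, w (i + 1) = z (i.val + 1) := by
    intro i
    haveI : Fact (1 < n) := ⟨by omega⟩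
    have hval : (i + 1).val = (i.val + 1) % n := by rw [ZMod.val_add, ZMod.val_one]
    show z (i + 1).val = z (i.val + 1)
    rw [hval]
    rcases lt_or_ge (i.val + 1) n with hlt | hge
    · rw [Nat.mod_eq_of_lt hlt]
    · have hvn : i.val + 1 = n := by have := ZMod.val_lt i; omega
      rw [hvn, Nat.mod_self, hz0, hzn]
  set μn : Measure M := ((n : ℝ≥0∞)⁻¹) • ∑ i : ZMod n, Measure.dirac (w i) with hμn
  set Pn : Measure (M × M) :=
    ((n : ℝ≥0∞)⁻¹) • ∑ i : ZMod n, Measure.dirac (w i, w (i + 1)) with hPn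
  haveI hμnp : IsProbabilityMeasure μn := aux_prob n w
  haveI hPnp : IsProbabilityMeasure Pn := aux_prob n (fun i => (w i, w (i + 1)))
  have hfst : Pn.map Prod.fst = μn := by
    rw [hPn, hμn, Measure.map_smul, aux_map_sum _ _ measurable_fst]
    congr 1
    exact Finset.sum_congr rfl fun i _ => Measure.map_dirac' measurable_fst _
  have hsnd : Pn.map Prod.snd = μn := by
    rw [hPn, hμn, Measure.map_smul, aux_map_sum _ _ measurable_snd]
    congr 1
    rw [show ∑ i : ZMod n, (Measure.dirac (w i, w (i + 1))).map Prod.snd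
        = ∑ i : ZMod n, Measure.dirac (w (i + 1)) from
      Finset.sum_congr rfl fun i _ => Measure.map_dirac' measurable_snd _]
    exact Equiv.sum_comp (Equiv.addRight (1 : ZMod n)) (fun i => Measure.dirac (w i))
  have hint : ∫ p, c T p.1 p.2 ∂Pn = (n : ℝ)⁻¹ * ∑ i : ZMod n, c T (w i) (w (i + 1)) := by
    rw [hPn, integral_smul_measure,
      integral_finset_sum_measure (fun i _ => aux_integrable (aux_cont hc hT) _)]
    simp [integral_dirac]
  have hsum : ∑ i : ZMod n, c T (w i) (w (i + 1))
      = ∑ j ∈ Finset.range n, c T (z j) (z (j + 1)) := by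
    calc ∑ i : ZMod n, c T (w i) (w (i + 1))
        = ∑ i : ZMod n, c T (z i.val) (z (i.val + 1)) :=
          Finset.sum_congr rfl fun i _ => by rw [hwsucc i]
      _ = ∑ j ∈ Finset.range n, c T (z j) (z (j + 1)) :=
          aux_zmod_sum n (fun j => c T (z j) (z (j + 1)))
  have htc : transportCost (c T) μn μn ≤ (n : ℝ)⁻¹ * (h * ((n : ℝ) * T) + K + 1) := by
    have hbdd : BddBelow {r : ℝ | ∃ P : Measure (M × M), IsProbabilityMeasure P ∧
        IsCoupling P μn μn ∧ r = ∫ p, c T p.1 p.2 ∂P} := by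
      refine ⟨h * T, ?_⟩
      rintro r ⟨P, hPp, hPc, rfl⟩
      haveI := hPp
      exact aux_lower hc hdpp hbound hT μn P hPc
    have hmem : (∫ p, c T p.1 p.2 ∂Pn) ∈ {r : ℝ | ∃ P : Measure (M × M),
        IsProbabilityMeasure P ∧ IsCoupling P μn μn ∧ r = ∫ p, c T p.1 p.2 ∂P} :=
      ⟨Pn, hPnp, ⟨hfst, hsnd⟩, rfl⟩
    refine le_trans (csInf_le hbdd hmem) ?_
    rw [hint, hsum]
    have hb : ∑ j ∈ Finset.range n, c T (z j) (z (j + 1)) ≤ h * ((n : ℝ) * T) + K + 1 := by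
      linarith
    exact mul_le_mul_of_nonneg_left hb (by positivity)
  have hrS : (1 / T) * transportCost (c T) μn μn ∈ S := ⟨μn, hμnp, rfl⟩
  refine le_trans (csInf_le hS_bdd hrS) ?_
  have heq : (1 / T) * ((n : ℝ)⁻¹ * (h * ((n : ℝ) * T) + K + 1))
      = h + (K + 1) / ((n : ℝ) * T) := by
    field_simp
    ring
  calc (1 / T) * transportCost (c T) μn μn
      ≤ (1 / T) * ((n : ℝ)⁻¹ * (h * ((n : ℝ) * T) + K + 1)) :=
        mul_le_mul_of_nonneg_left htc (by positivity)
    _ = h + (K + 1) / ((n : ℝ) * T) := heq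
    _ ≤ h + ε := by linarith
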